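/- In a deterministic goal-reaching decision process where from every non-goal state some action decreases dist by exactly 1 and every action decreases dist by at most 1, with shaped rewards r'(s, a, s') = 1_{goal}(s') + γ·γ^{dist(s')} − γ^{dist(s)} where goal states use potential c satisfying 1 + γc = γ, the optimal value function satisfies V*(s) = 0 for all non-goal states s, where V*(s) = sup over action sequences of the discounted sum of shaped rewards. -/

import Mathlib

open Classical in
/-- Trajectory of a deterministic decision process under an action sequence. -/
def detTraj {S A : Type*} (step : S → A → S) (s : S) (as : ℕ → A) : ℕ → S
  | 0 => s
  | n + 1 => step (detTraj step s as n) (as n)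

open Classical in
/-- Shaped one-step reward `1_goal(s') + γ·Pot(s') − Pot(s)` with
`Pot x = γ^(dist x)` on non-goals and `Pot = c` on goals. -/
noncomputable def shapedStepReward {S A : Type*} (γ c : ℝ) (goal : S → Prop)
    (dist : S → ℕ) (step : S → A → S) (s : S) (a : A) : ℝ :=
  (if goal (step s a) then (1 : ℝ) else 0)
    + γ * (if goal (step s a) then c else γ ^ dist (step s a))
    - (if goal s then c else γ ^ dist s)

open Classical in
/-- Discounted shaped return of an action sequence from `s`: episodes terminate
upon first reaching a goal; otherwise the infinite discounted sum is taken. -/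
noncomputable def shapedReturn {S A : Type*} (γ c : ℝ) (goal : S → Prop)
    (dist : S → ℕ) (step : S → A → S) (s : S) (as : ℕ → A) : ℝ :=
  if h : ∃ n, goal (detTraj step s as n) then
    ∑ k ∈ Finset.range (Nat.find h),
      γ ^ k * shapedStepReward γ c goal dist step (detTraj step s as k) (as k)
  else
    ∑' k : ℕ, γ ^ k * shapedStepReward γ c goal dist step (detTraj step s as k) (as k)

/-- Theorem 2: with potential `γ^dist` and goal potential `c` with `1 + γ c = γ`,
the optimal value of every non-goal state is `0` (the supremum over action
sequences of the discounted shaped return is attained and equals `0`). -/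
theorem optimal_value_zero {S A : Type*} (γ c : ℝ) (hγ0 : 0 < γ) (hγ1 : γ < 1)
    (hc : 1 + γ * c = γ)
    (goal : S → Prop) (dist : S → ℕ) (step : S → A → S)
    (hdist0 : ∀ s, dist s = 0 ↔ goal s)
    (hlip : ∀ s a, dist s ≤ dist (step s a) + 1)
    (hex : ∀ s, ¬ goal s → ∃ a, dist (step s a) + 1 = dist s) :
    ∀ s, ¬ goal s →
      IsGreatest {x : ℝ | ∃ as : ℕ → A, x = shapedReturn γ c goal dist step s as} 0 := by
  intro s hs
  classical
  -- telescoping identity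
  have key : ∀ (as : ℕ → A) (k : ℕ), ¬ goal (detTraj step s as k) →
      γ ^ k * shapedStepReward γ c goal dist step (detTraj step s as k) (as k)
        = γ ^ ((k+1) + dist (detTraj step s as (k+1)))
          - γ ^ (k + dist (detTraj step s as k)) := by
    intro as k hk
    have hstep : detTraj step s as (k+1) = step (detTraj step s as k) (as k) := rfl
    by_cases hg : goal (detTraj step s as (k+1))
    · have hd : dist (detTraj step s as (k+1)) = 0 := (hdist0 _).mpr hg
      rw [hstep] at hg
      simp only [shapedStepReward, if_pos hg, if_neg hk, hd, pow_add, pow_zero]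
      linear_combination (γ ^ k) * hc
    · simp only [shapedStepReward, ← hstep, if_neg hg, if_neg hk, pow_add, pow_succ]
      ring
  -- distances grow back slowly along any trajectory
  have hgrow : ∀ (as : ℕ → A) (n : ℕ),
      dist s ≤ n + dist (detTraj step s as n) := by
    intro as n
    induction n with
    | zero => simp [detTraj]
    | succ n ih =>
      have := hlip (detTraj step s as n) (as n)
      have hstep : detTraj step s as (n+1) = step (detTraj step s as n) (as n) := rfl
      rw [hstep]; omega
  constructor
  · -- membership: construct the greedy action sequence
    have hA : Nonempty A := ⟨(hex s hs).choose⟩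
    let act : S → A := fun t => if h : goal t then Classical.arbitrary A else (hex t h).choose
    have hact : ∀ t, ¬ goal t → dist (step t (act t)) + 1 = dist t := by
      intro t ht
      have : act t = (hex t ht).choose := dif_neg ht
      rw [this]
      exact (hex t ht).choose_spec
    let σ : ℕ → S := fun n => Nat.rec s (fun _ x => step x (act x)) n
    let as : ℕ → A := fun n => act (σ n)
    have hσ : ∀ n, detTraj step s as n = σ n := by
      intro n
      induction n with
      | zero => rfl
      | succ n ih => show step (detTraj step s as n) (as n) = step (σ n) (act (σ n));
                     rw [ih]
    have hdn : ∀ n, n ≤ dist s → dist (σ n) + n = dist s := by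
      intro n hn
      induction n with
      | zero => simp [σ]
      | succ n ih =>
        have ihn := ih (by omega)
        have hng : ¬ goal (σ n) := by
          intro hg
          have := (hdist0 (σ n)).mpr hg
          omega
        have := hact (σ n) hng
        have hstep : σ (n+1) = step (σ n) (act (σ n)) := rfl
        rw [hstep]; omega
    have hgoalN : goal (σ (dist s)) := by
      have := hdn (dist s) le_rfl
      exact (hdist0 _).mp (by omega)
    have hpre : ∀ n < dist s, ¬ goal (σ n) := by
      intro n hn hg
      have := (hdist0 (σ n)).mpr hg
      have := hdn n hn.le
      omega
    refine ⟨as, ?_⟩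
    have hexn : ∃ n, goal (detTraj step s as n) := ⟨dist s, by rw [hσ]; exact hgoalN⟩
    have hfind : Nat.find hexn = dist s := by
      rw [Nat.find_eq_iff]
      exact ⟨by rw [hσ]; exact hgoalN, fun n hn => by rw [hσ]; exact hpre n hn⟩
    rw [shapedReturn, dif_pos hexn, hfind]
    have hsum : ∑ k ∈ Finset.range (dist s),
        γ ^ k * shapedStepReward γ c goal dist step (detTraj step s as k) (as k)
        = γ ^ (dist s + dist (detTraj step s as (dist s)))
          - γ ^ (0 + dist (detTraj step s as 0)) := by
      rw [← Finset.sum_range_sub (fun k => γ ^ (k + dist (detTraj step s as k)))]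
      exact Finset.sum_congr rfl fun k hk =>
        key as k (by rw [hσ]; exact hpre k (Finset.mem_range.mp hk))
    rw [hsum]
    have h1 : dist (detTraj step s as (dist s)) = 0 := by
      rw [hσ]; exact (hdist0 _).mpr hgoalN
    have h0 : detTraj step s as 0 = s := rfl
    rw [h1, h0]
    ring
  · -- upper bound
    rintro x ⟨as, rfl⟩
    rw [shapedReturn]
    split
    · next h =>
      set N := Nat.find h with hN
      have hsum : ∑ k ∈ Finset.range N,
          γ ^ k * shapedStepReward γ c goal dist step (detTraj step s as k) (as k)
          = γ ^ (N + dist (detTraj step s as N))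
            - γ ^ (0 + dist (detTraj step s as 0)) := by
        rw [← Finset.sum_range_sub (fun k => γ ^ (k + dist (detTraj step s as k)))]
        exact Finset.sum_congr rfl fun k hk =>
          key as k (Nat.find_min h (Finset.mem_range.mp hk))
      rw [hsum]
      have h0 : detTraj step s as 0 = s := rfl
      rw [h0]
      have hdN : dist (detTraj step s as N) = 0 := (hdist0 _).mpr (Nat.find_spec h)
      rw [hdN]
      have hle : dist s ≤ N + 0 := by have := hgrow as N; omega
      have := pow_le_pow_of_le_one hγ0.le hγ1.le hle
      simp only [zero_add] at *
      linarith
    · next h =>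
      push_neg at h
      refine tsum_nonpos fun k => ?_
      rw [key as k (h k)]
      have hle : k + dist (detTraj step s as k)
          ≤ (k+1) + dist (detTraj step s as (k+1)) := by
        have := hlip (detTraj step s as k) (as k)
        have hstep : detTraj step s as (k+1) = step (detTraj step s as k) (as k) := rfl
        rw [hstep]; omega
      have := pow_le_pow_of_le_one hγ0.le hγ1.le hle
      linarith
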